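/- Removable singularity and maximum principle with o(log) growth: Let D ⊂ ℂ be a bounded domain (open and connected) with 0 ∈ D. Let u be continuous on (closure of D) \ {0} and subharmonic on D \ {0}, with u(z) ≤ 0 for every z ∈ ∂D, and suppose u(z) = o(log(1/|z|)) as z → 0, i.e. u(z)/log(1/|z|) → 0. Then u(z) ≤ 0 for all z ∈ D \ {0}; moreover, if u(z₀) = 0 for some z₀ ∈ D \ {0}, then u ≡ 0 on D \ {0}. -/

import Mathlib

open Complex Metric Set Filter
open Topology

/-- A continuous function `u` on an open set `U ⊆ ℂ` is subharmonic if it satisfies the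
sub-mean-value inequality on every closed disk contained in `U`. -/
def SubharmonicOn (u : ℂ → ℝ) (U : Set ℂ) : Prop :=
  ContinuousOn u U ∧ ∀ (z : ℂ) (r : ℝ), 0 < r → Metric.closedBall z r ⊆ U →
    u z ≤ (2 * Real.pi)⁻¹ *
      ∫ t in (0:ℝ)..(2 * Real.pi), u (z + (r : ℂ) * Complex.exp (Complex.I * t))


set_option maxHeartbeats 2000000 in
lemma mean_log {c : ℂ} {r : ℝ} (hr : 0 < r) (hrc : r < ‖c‖) :
    (∫ t in (0:ℝ)..(2 * Real.pi), Real.log (‖c + (r:ℂ) * Complex.exp (Complex.I * t)‖))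
      = 2 * Real.pi * Real.log (‖c‖) := by
  have hca : 0 < ‖c‖ := hr.trans hrc
  have hc0 : c ≠ 0 := by
    simpa using hca.ne'
  -- f = log (z / c) is differentiable on closedBall c r
  set f : ℂ → ℂ := fun z => Complex.log (z / c) with hf
  have hmem : ∀ z ∈ closedBall c r, z / c ∈ Complex.slitPlane := by
    intro z hz
    have h1 : ‖z / c - 1‖ ≤ r / ‖c‖ := by
      have : z / c - 1 = (z - c) / c := by field_simp
      rw [this, norm_div]
      have : ‖z - c‖ ≤ r := by
        rwa [mem_closedBall, Complex.dist_eq] at hz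
      gcongr
    have h2 : r / ‖c‖ < 1 := (div_lt_one hca).2 hrc
    have h3 : (1:ℝ) - ‖z / c - 1‖ ≤ (z / c).re := by
      have := Complex.abs_re_le_norm (z / c - 1)
      have h4 : |(z / c).re - 1| ≤ ‖z / c - 1‖ := by
        simpa using this
      have := abs_le.1 h4
      linarith [this.1]
    exact Complex.mem_slitPlane_iff.2 (Or.inl (by nlinarith))
  have hdiff : DifferentiableOn ℂ f (closedBall c r) := by
    intro z hz
    have : DifferentiableAt ℂ f z := by
      have h1 : DifferentiableAt ℂ (fun z : ℂ => z / c) z := (differentiableAt_id.div_const c)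
      exact (Complex.differentiableAt_log (hmem z hz)).comp z h1
    exact this.differentiableWithinAt
  have hkey : (∮ z in C(c, r), (z - c)⁻¹ • f z) = (2 * Real.pi * Complex.I : ℂ) • f c :=
    hdiff.circleIntegral_sub_inv_smul (mem_ball_self hr)
  -- unfold the circle integral
  have hunfold : (∮ z in C(c, r), (z - c)⁻¹ • f z)
      = Complex.I * ∫ t in (0:ℝ)..(2 * Real.pi), f (circleMap c r t) := by
    rw [circleIntegral]
    rw [← intervalIntegral.integral_const_mul]
    apply intervalIntegral.integral_congr
    intro t _
    have h1 : circleMap c r t - c = circleMap 0 r t := circleMap_sub_center c r t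
    have h2 : circleMap 0 r t ≠ 0 := by
      simpa using circleMap_ne_center (c := 0) (R := r) hr.ne' (θ := t)
    simp only [deriv_circleMap, h1, smul_eq_mul]
    field_simp
  have hfc : f c = 0 := by simp [hf, div_self hc0]
  have hint : (∫ t in (0:ℝ)..(2 * Real.pi), f (circleMap c r t)) = 0 := by
    have := hkey.symm.trans hunfold
    rw [hfc, smul_zero] at this
    have hI : (Complex.I : ℂ) ≠ 0 := Complex.I_ne_zero
    field_simp at this
    exact (mul_eq_zero.1 this.symm).resolve_left hI
  -- continuity of the integrand
  have hcont : Continuous fun t : ℝ => f (circleMap c r t) := by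
    rw [continuous_iff_continuousAt]
    intro t
    have h1 : ContinuousAt (fun z : ℂ => z / c) (circleMap c r t) :=
      (continuous_id.div_const c).continuousAt
    have h2 : ContinuousAt Complex.log (circleMap c r t / c) :=
      continuousAt_clog (hmem _ (circleMap_mem_closedBall c hr.le t))
    have h3 := ContinuousAt.comp (x := circleMap c r t) h2 h1
    exact h3.comp (continuous_circleMap c r).continuousAt
  have habs : ∀ t : ℝ, ‖circleMap c r t‖ ≠ 0 := by
    intro t
    have h1 : ‖circleMap c r t - c‖ = r := by
      rw [circleMap_sub_center]
      simpa [abs_of_pos hr] using norm_circleMap_zero r t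
    have h3 : ‖c‖ - ‖circleMap c r t‖ ≤ r := by
      have h4 := norm_sub_norm_le c (circleMap c r t)
      rw [norm_sub_rev] at h4
      rw [h1] at h4
      exact h4
    intro h
    rw [h] at h3
    linarith
  -- take real parts
  have hre : (∫ t in (0:ℝ)..(2 * Real.pi), (f (circleMap c r t)).re) = 0 := by
    have h := Complex.reCLM.intervalIntegral_comp_comm
      (hcont.intervalIntegrable (μ := MeasureTheory.volume) (0:ℝ) (2 * Real.pi))
    simp only [Complex.reCLM_apply] at h
    rw [h, hint]
    simp
  have hre2 : ∀ t : ℝ, (f (circleMap c r t)).re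
      = Real.log (‖circleMap c r t‖) - Real.log (‖c‖) := by
    intro t
    rw [hf]
    simp only [Complex.log_re, norm_div]
    exact Real.log_div (habs t) (by simpa using hc0)
  have hint2 : (∫ t in (0:ℝ)..(2 * Real.pi),
      (Real.log (‖circleMap c r t‖) - Real.log (‖c‖))) = 0 := by
    have heq : (∫ t in (0:ℝ)..(2 * Real.pi),
        (Real.log (‖circleMap c r t‖) - Real.log (‖c‖)))
        = ∫ t in (0:ℝ)..(2 * Real.pi), (f (circleMap c r t)).re :=
      intervalIntegral.integral_congr (fun t _ => (hre2 t).symm)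
    rw [heq, hre]
  have hcontlog : Continuous fun t : ℝ => Real.log (‖circleMap c r t‖) := by
    rw [continuous_iff_continuousAt]
    intro t
    exact ((Real.continuousAt_log (habs t)).comp
      continuous_norm.continuousAt).comp (continuous_circleMap c r).continuousAt
  have hint3 : (∫ t in (0:ℝ)..(2 * Real.pi), Real.log (‖circleMap c r t‖))
      = 2 * Real.pi * Real.log (‖c‖) := by
    have hsub := intervalIntegral.integral_sub
      (hcontlog.intervalIntegrable (0:ℝ) (2 * Real.pi))
      (intervalIntegrable_const (c := Real.log (‖c‖)) (μ := MeasureTheory.volume) (a := (0:ℝ)) (b := 2 * Real.pi))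
    rw [hsub] at hint2
    rw [intervalIntegral.integral_const] at hint2
    have : (2 * Real.pi - 0) • Real.log (‖c‖) = 2 * Real.pi * Real.log (‖c‖) := by
      simp [smul_eq_mul]
    rw [this] at hint2
    linarith
  -- finally convert circleMap to the exp form
  have hcirc : ∀ t : ℝ, c + (r:ℂ) * Complex.exp (Complex.I * t) = circleMap c r t := by
    intro t
    rw [circleMap, mul_comm Complex.I (t:ℂ)]
  simp_rw [hcirc]
  exact hint3

lemma circle_force {U : Set ℂ} {v : ℂ → ℝ} (hcont : ContinuousOn v U)
    (hsm : ∀ (z : ℂ) (r : ℝ), 0 < r → Metric.closedBall z r ⊆ U →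
      v z ≤ (2 * Real.pi)⁻¹ *
        ∫ t in (0:ℝ)..(2 * Real.pi), v (z + (r : ℂ) * Complex.exp (Complex.I * t)))
    {M : ℝ} (hM : ∀ x ∈ U, v x ≤ M) {z : ℂ} {r : ℝ} (hr : 0 < r)
    (hball : Metric.closedBall z r ⊆ U) (hz : v z = M) :
    ∀ x ∈ Metric.closedBall z r, v x = M := by
  have h2pi : 0 < 2 * Real.pi := by positivity
  intro x hx
  rcases eq_or_ne x z with rfl | hxz
  · exact hz
  set s := ‖x - z‖ with hs
  have hs0 : 0 < s := by
    have : x - z ≠ 0 := sub_ne_zero.2 hxz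
    simpa [hs] using norm_pos_iff.mpr this
  have hsr : s ≤ r := by rwa [mem_closedBall, Complex.dist_eq] at hx
  have hball' : Metric.closedBall z s ⊆ U :=
    (closedBall_subset_closedBall hsr).trans hball
  set g : ℝ → ℝ := fun t => v (z + (s:ℂ) * Complex.exp (Complex.I * t)) with hg
  have habsexp : ∀ t : ℝ, ‖Complex.exp (Complex.I * t)‖ = 1 := by
    intro t
    rw [mul_comm]
    exact Complex.norm_exp_ofReal_mul_I t
  have hmemc : ∀ t : ℝ, z + (s:ℂ) * Complex.exp (Complex.I * t) ∈ Metric.closedBall z s := by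
    intro t
    rw [mem_closedBall, Complex.dist_eq]
    have : z + (s:ℂ) * Complex.exp (Complex.I * t) - z = (s:ℂ) * Complex.exp (Complex.I * t) := by
      ring
    rw [this, norm_mul, habsexp, mul_one]
    simp [abs_of_pos hs0]
  have hgcont : Continuous g := by
    apply hcont.comp_continuous
    · exact continuous_const.add (continuous_const.mul
        (Complex.continuous_exp.comp (continuous_const.mul Complex.continuous_ofReal)))
    · exact fun t => hball' (hmemc t)
  have hgle : ∀ t, g t ≤ M := fun t => hM _ (hball' (hmemc t))
  have hmean : M ≤ (2 * Real.pi)⁻¹ * ∫ t in (0:ℝ)..(2 * Real.pi), g t := by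
    rw [← hz]
    exact hsm z s hs0 hball'
  have hle2 : (∫ t in (0:ℝ)..(2 * Real.pi), g t) ≤ 2 * Real.pi * M := by
    have := intervalIntegral.integral_mono_on (μ := MeasureTheory.volume) h2pi.le
      (hgcont.intervalIntegrable _ _)
      (intervalIntegrable_const (c := M))
      (fun t _ => hgle t)
    simpa using this
  have hIg : (∫ t in (0:ℝ)..(2 * Real.pi), g t) = 2 * Real.pi * M := by
    have h1 : 2 * Real.pi * M ≤ ∫ t in (0:ℝ)..(2 * Real.pi), g t := by
      rw [inv_mul_eq_div, le_div_iff₀ h2pi] at hmean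
      linarith
    linarith
  have hgeq : ∀ t ∈ Icc (0:ℝ) (2 * Real.pi), g t = M := by
    intro t₀ ht₀
    by_contra hne
    have hlt : g t₀ < M := lt_of_le_of_ne (hgle t₀) hne
    have hpos : 0 < ∫ t in (0:ℝ)..(2 * Real.pi), (M - g t) := by
      apply intervalIntegral.integral_pos h2pi
      · exact (continuous_const.sub hgcont).continuousOn
      · exact fun t _ => sub_nonneg.2 (hgle t)
      · exact ⟨t₀, ht₀, sub_pos.2 hlt⟩
    have hsubint : (∫ t in (0:ℝ)..(2 * Real.pi), (M - g t))
        = 2 * Real.pi * M - ∫ t in (0:ℝ)..(2 * Real.pi), g t := by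
      rw [intervalIntegral.integral_sub (intervalIntegrable_const (c := M))
        (hgcont.intervalIntegrable _ _)]
      simp [mul_comm]
    rw [hsubint, hIg] at hpos
    linarith
  -- express x via the argument
  have harg : x = z + (s:ℂ) * Complex.exp (Complex.I * (Complex.arg (x - z) : ℝ)) := by
    have h := Complex.norm_mul_exp_arg_mul_I (x - z)
    rw [mul_comm ((Complex.arg (x - z) : ℂ)) Complex.I] at h
    rw [hs]
    linear_combination -h
  set a := Complex.arg (x - z) with ha
  rcases le_or_gt 0 a with hge | hltz
  · have := hgeq a ⟨hge, le_trans (Complex.arg_le_pi _) (by linarith [Real.pi_pos])⟩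
    rw [hg] at this
    rw [harg]
    exact this
  · have hmem : a + 2 * Real.pi ∈ Icc (0:ℝ) (2 * Real.pi) := by
      constructor
      · linarith [Complex.neg_pi_lt_arg (x - z), Real.pi_pos]
      · linarith
    have heq := hgeq _ hmem
    simp only [hg] at heq
    have hexp : Complex.exp (Complex.I * ((a + 2 * Real.pi : ℝ) : ℂ))
        = Complex.exp (Complex.I * (a : ℝ)) := by
      push_cast
      rw [mul_add, Complex.exp_add]
      have : Complex.I * (2 * Real.pi) = 2 * Real.pi * Complex.I := by ring
      rw [this, Complex.exp_two_pi_mul_I, mul_one]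
    rw [hexp] at heq
    rw [harg]
    exact heq

lemma weakMax {U : Set ℂ} (hUo : IsOpen U) (hUb : Bornology.IsBounded U)
    {v : ℂ → ℝ} (hcv : ContinuousOn v (closure U))
    (hsm : ∀ (z : ℂ) (r : ℝ), 0 < r → Metric.closedBall z r ⊆ U →
      v z ≤ (2 * Real.pi)⁻¹ *
        ∫ t in (0:ℝ)..(2 * Real.pi), v (z + (r:ℂ) * Complex.exp (Complex.I * t)))
    (hfr : ∀ w ∈ frontier U, v w ≤ 0) :
    ∀ z ∈ U, v z ≤ 0 := by
  rcases U.eq_empty_or_nonempty with rfl | hne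
  · simp
  have hcomp : IsCompact (closure U) := hUb.isCompact_closure
  obtain ⟨x₀, hx₀mem, hx₀max⟩ := hcomp.exists_isMaxOn hne.closure hcv
  set M := v x₀ with hMdef
  intro z hz
  have hzM : v z ≤ M := hx₀max (subset_closure hz)
  by_contra hcon
  push_neg at hcon
  have hM : 0 < M := lt_of_lt_of_le hcon hzM
  have hx₀U : x₀ ∈ U := by
    by_contra h
    have hfr' : x₀ ∈ frontier U := by
      rw [hUo.frontier_eq]
      exact ⟨hx₀mem, h⟩
    linarith [hfr x₀ hfr']
  set S := {w : ℂ | w ∈ U ∧ v w = M} with hSdef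
  have hSsub : S ⊆ U := fun y hy => hy.1
  have hSopen : IsOpen S := by
    rw [Metric.isOpen_iff]
    rintro w ⟨hwU, hwv⟩
    obtain ⟨ε, hε, hballU⟩ := Metric.isOpen_iff.1 hUo w hwU
    refine ⟨ε/2, by linarith, ?_⟩
    intro y hy
    have hcb : Metric.closedBall w (ε/2) ⊆ U :=
      (closedBall_subset_ball (by linarith)).trans hballU
    have hforce := circle_force (hcv.mono subset_closure) hsm
      (fun x hx => hx₀max (subset_closure hx)) (by linarith : (0:ℝ) < ε/2) hcb hwv
    exact ⟨hcb (ball_subset_closedBall hy), hforce y (ball_subset_closedBall hy)⟩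
  have hSne : S.Nonempty := ⟨x₀, hx₀U, rfl⟩
  have hSclosed : IsClosed S := by
    refine isClosed_of_closure_subset ?_
    intro w hw
    have hScl : S ⊆ closure U := fun y hy => subset_closure hy.1
    have hwcl : w ∈ closure U := by
      have := closure_mono hScl hw
      rwa [closure_closure] at this
    have hvw : v w = M := by
      have hcw : ContinuousWithinAt v S w := (hcv w hwcl).mono hScl
      have hne' : (𝓝[S] w).NeBot := mem_closure_iff_nhdsWithin_neBot.1 hw
      have h1 : Tendsto v (𝓝[S] w) (𝓝 (v w)) := hcw
      have h2 : Tendsto v (𝓝[S] w) (𝓝 M) := by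
        apply Tendsto.congr' ?_ tendsto_const_nhds
        filter_upwards [self_mem_nhdsWithin] with y hy
        exact hy.2.symm
      exact tendsto_nhds_unique h1 h2
    rcases em (w ∈ U) with h | h
    · exact ⟨h, hvw⟩
    · exfalso
      have hfr' : w ∈ frontier U := by rw [hUo.frontier_eq]; exact ⟨hwcl, h⟩
      have := hfr w hfr'
      rw [hvw] at this
      linarith
  have hSuniv : S = univ := IsClopen.eq_univ ⟨hSclosed, hSopen⟩ hSne
  have hUuniv : U = univ := eq_univ_of_univ_subset (hSuniv ▸ hSsub)
  obtain ⟨C, hC⟩ := Metric.isBounded_iff.1 hUb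
  have h1 : ((0:ℂ) ∈ U) := hUuniv ▸ mem_univ _
  have h2 : ((|C| + 1 : ℝ) : ℂ) ∈ U := hUuniv ▸ mem_univ _
  have h3 := hC h1 h2
  rw [Complex.dist_eq] at h3
  have h4 : ‖(0:ℂ) - ((|C| + 1 : ℝ) : ℂ)‖ = |C| + 1 := by
    rw [zero_sub, norm_neg]
    rw [Complex.norm_real, Real.norm_eq_abs]
    have : (0:ℝ) ≤ |C| + 1 := by positivity
    rw [_root_.abs_of_nonneg this]
  rw [h4] at h3
  have := abs_nonneg C
  have := le_abs_self C
  linarith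

lemma eqZeroOn {U : Set ℂ} (hUo : IsOpen U) (hpc : IsPreconnected U)
    {v : ℂ → ℝ} (hcv : ContinuousOn v U)
    (hsm : ∀ (z : ℂ) (r : ℝ), 0 < r → Metric.closedBall z r ⊆ U →
      v z ≤ (2 * Real.pi)⁻¹ *
        ∫ t in (0:ℝ)..(2 * Real.pi), v (z + (r:ℂ) * Complex.exp (Complex.I * t)))
    (hle : ∀ x ∈ U, v x ≤ 0) {z₀ : ℂ} (hz₀ : z₀ ∈ U) (h0 : v z₀ = 0) :
    ∀ z ∈ U, v z = 0 := by
  set S := {w : ℂ | w ∈ U ∧ v w = 0} with hSdef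
  have hSopen : IsOpen S := by
    rw [Metric.isOpen_iff]
    rintro w ⟨hwU, hwv⟩
    obtain ⟨ε, hε, hballU⟩ := Metric.isOpen_iff.1 hUo w hwU
    refine ⟨ε/2, by linarith, ?_⟩
    intro y hy
    have hcb : Metric.closedBall w (ε/2) ⊆ U :=
      (closedBall_subset_ball (by linarith)).trans hballU
    have hforce := circle_force hcv hsm hle (by linarith : (0:ℝ) < ε/2) hcb hwv
    exact ⟨hcb (ball_subset_closedBall hy), hforce y (ball_subset_closedBall hy)⟩
  set T := U ∩ v ⁻¹' (Iio 0) with hTdef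
  have hTopen : IsOpen T := hcv.isOpen_inter_preimage hUo isOpen_Iio
  intro z hz
  by_contra hne
  have hzT : z ∈ T := ⟨hz, lt_of_le_of_ne (hle z hz) hne⟩
  have hcover : U ⊆ S ∪ T := by
    intro x hx
    rcases eq_or_lt_of_le (hle x hx) with h | h
    · exact Or.inl ⟨hx, h⟩
    · exact Or.inr ⟨hx, h⟩
  have hres := hpc S T hSopen hTopen hcover ⟨z₀, hz₀, hz₀, h0⟩ ⟨z, hz, hzT⟩
  obtain ⟨w, _, ⟨_, hw1⟩, _, hw2⟩ := hres
  exact absurd hw1 (ne_of_lt hw2)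

lemma punctured_ball_preconnected {ρ : ℝ} (hρ : 0 < ρ) :
    IsPreconnected (Metric.ball (0:ℂ) ρ \ {0}) := by
  have hrank : 1 < Module.rank ℝ ℂ := by
    rw [Complex.rank_real_complex]
    exact Nat.one_lt_ofNat
  set L : Set ℂ := (fun t : ℝ => (t:ℂ)) '' Ioo 0 ρ with hL
  have hLpc : IsPreconnected L :=
    isPreconnected_Ioo.image _ Complex.continuous_ofReal.continuousOn
  set P : ℝ → Set ℂ := fun s => Metric.sphere (0:ℂ) s ∪ L with hP
  have hPpc : ∀ s ∈ Ioo (0:ℝ) ρ, IsPreconnected (P s) := by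
    intro s hs
    apply IsPreconnected.union (s:ℂ)
    · rw [mem_sphere, Complex.dist_eq, sub_zero, Complex.norm_real, Real.norm_eq_abs, _root_.abs_of_pos hs.1]
    · exact ⟨s, hs, rfl⟩
    · exact isPreconnected_sphere hrank 0 s
    · exact hLpc
  have hcommon : ∀ s ∈ Ioo (0:ℝ) ρ, ((ρ/2 : ℝ) : ℂ) ∈ P s := by
    intro s hs
    exact Or.inr ⟨ρ/2, ⟨by linarith, by linarith⟩, rfl⟩
  have hunion : Metric.ball (0:ℂ) ρ \ {0} = ⋃ s ∈ Ioo (0:ℝ) ρ, P s := by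
    apply Subset.antisymm
    · rintro x ⟨hx1, hx2⟩
      have hx0 : x ≠ 0 := hx2
      have habs : ‖x‖ ∈ Ioo (0:ℝ) ρ := by
        constructor
        · exact norm_pos_iff.mpr hx0
        · rwa [mem_ball, Complex.dist_eq, sub_zero] at hx1
      refine mem_biUnion habs (Or.inl ?_)
      rw [mem_sphere, Complex.dist_eq, sub_zero]
    · intro x hx
      simp only [mem_iUnion] at hx
      obtain ⟨s, hs, hxP⟩ := hx
      rcases hxP with h | h
      · rw [mem_sphere, Complex.dist_eq, sub_zero] at h
        constructor
        · rw [mem_ball, Complex.dist_eq, sub_zero, h]; exact hs.2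
        · intro h0
          rw [mem_singleton_iff] at h0
          rw [h0] at h
          simp at h
          exact absurd h.symm (ne_of_gt hs.1)
      · obtain ⟨t, ht, rfl⟩ := h
        constructor
        · rw [mem_ball, Complex.dist_eq, sub_zero, Complex.norm_real, Real.norm_eq_abs,
            _root_.abs_of_pos ht.1]
          exact ht.2
        · intro h0
          rw [mem_singleton_iff] at h0
          have ht0 : (t:ℂ) = 0 := h0
          have : t = 0 := by exact_mod_cast ht0
          exact absurd this (ne_of_gt ht.1)
  rw [hunion, ← sUnion_image]
  apply isPreconnected_sUnion ((ρ/2 : ℝ) : ℂ)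
  · rintro s ⟨t, ht, rfl⟩
    exact hcommon t ht
  · rintro s ⟨t, ht, rfl⟩
    exact hPpc t ht

lemma punctured_domain_preconnected {D : Set ℂ} (hopen : IsOpen D) (hpc : IsPreconnected D)
    (h0 : (0:ℂ) ∈ D) : IsPreconnected (D \ {0}) := by
  obtain ⟨ρ, hρ, hballD⟩ := Metric.isOpen_iff.1 hopen 0 h0
  set A := Metric.ball (0:ℂ) ρ \ {0} with hA
  have hApc := punctured_ball_preconnected hρ
  have hAsub : A ⊆ D \ {0} := fun x hx => ⟨hballD hx.1, hx.2⟩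
  have hmemA : ∀ t : ℝ, 0 < t → t < ρ → (t : ℂ) ∈ A := by
    intro t ht1 ht2
    constructor
    · rw [mem_ball, Complex.dist_eq, sub_zero, Complex.norm_real, Real.norm_eq_abs, _root_.abs_of_pos ht1]
      exact ht2
    · intro h
      rw [mem_singleton_iff] at h
      have : t = 0 := by exact_mod_cast h
      exact absurd this (ne_of_gt ht1)
  have key : ∀ V₁ V₂ : Set ℂ, IsOpen V₁ → IsOpen V₂ → (D \ {0}) ⊆ V₁ ∪ V₂ →
      ((D \ {0}) ∩ V₂).Nonempty → A ⊆ V₁ → (D \ {0}) ∩ (V₁ ∩ V₂) = ∅ → False := by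
    intro V₁ V₂ h1 h2 hcover hne2 hAV₁ hcon
    have hres := hpc (V₁ ∪ Metric.ball (0:ℂ) ρ) V₂ (h1.union Metric.isOpen_ball) h2
      (by
        intro x hx
        rcases eq_or_ne x 0 with rfl | hx0
        · exact Or.inl (Or.inr (mem_ball_self hρ))
        · rcases hcover ⟨hx, hx0⟩ with h | h
          · exact Or.inl (Or.inl h)
          · exact Or.inr h)
      ⟨0, h0, Or.inr (mem_ball_self hρ)⟩
      (hne2.mono (inter_subset_inter_left _ diff_subset))
    obtain ⟨w, hwD, hwW₁, hwV₂⟩ := hres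
    rcases eq_or_ne w 0 with rfl | hw0
    · obtain ⟨ε, hε, hballV₂⟩ := Metric.isOpen_iff.1 h2 0 hwV₂
      set t := min ε ρ / 2 with ht
      have ht1 : 0 < t := by positivity
      have htε : t < ε := by
        have := min_le_left ε ρ
        have := min_le_right ε ρ
        simp only [ht]
        rcases le_total ε ρ with h | h <;> simp [min_eq_left, min_eq_right, h] <;> linarith
      have htρ : t < ρ := by
        simp only [ht]
        rcases le_total ε ρ with h | h <;> simp [min_eq_left, min_eq_right, h] <;> linarith
      have hxA : (t : ℂ) ∈ A := hmemA t ht1 htρ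
      have hxV₂ : (t : ℂ) ∈ V₂ := by
        apply hballV₂
        rw [mem_ball, Complex.dist_eq, sub_zero, Complex.norm_real, Real.norm_eq_abs, _root_.abs_of_pos ht1]
        exact htε
      have : (t : ℂ) ∈ (D \ {0}) ∩ (V₁ ∩ V₂) := ⟨hAsub hxA, hAV₁ hxA, hxV₂⟩
      rw [hcon] at this
      exact this
    · have hwV₁ : w ∈ V₁ := by
        rcases hwW₁ with h | h
        · exact h
        · exact hAV₁ ⟨h, hw0⟩
      have : w ∈ (D \ {0}) ∩ (V₁ ∩ V₂) := ⟨⟨hwD, hw0⟩, hwV₁, hwV₂⟩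
      rw [hcon] at this
      exact this
  intro V₁ V₂ h1 h2 hcover hne1 hne2
  by_contra hcon
  rw [not_nonempty_iff_eq_empty] at hcon
  rcases (A ∩ V₂).eq_empty_or_nonempty with hAV₂ | hAV₂
  · have hAV₁ : A ⊆ V₁ := by
      intro a ha
      rcases hcover (hAsub ha) with h | h
      · exact h
      · exact absurd (show a ∈ A ∩ V₂ from ⟨ha, h⟩) (by rw [hAV₂]; exact notMem_empty a)
    exact absurd (key V₁ V₂ h1 h2 hcover hne2 hAV₁ hcon) (by simp)
  · rcases (A ∩ V₁).eq_empty_or_nonempty with hAV₁ | hAV₁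
    · have hAV₂' : A ⊆ V₂ := by
        intro a ha
        rcases hcover (hAsub ha) with h | h
        · exact absurd (show a ∈ A ∩ V₁ from ⟨ha, h⟩) (by rw [hAV₁]; exact notMem_empty a)
        · exact h
      have hcon' : (D \ {0}) ∩ (V₂ ∩ V₁) = ∅ := by rwa [inter_comm V₂ V₁]
      exact absurd (key V₂ V₁ h2 h1 (by rwa [union_comm]) hne1 hAV₂' hcon') (by simp)
    · have hres := hApc V₁ V₂ h1 h2 (hAsub.trans hcover) hAV₁ hAV₂
      obtain ⟨x, hxA, hx12⟩ := hres
      have : x ∈ (D \ {0}) ∩ (V₁ ∩ V₂) := ⟨hAsub hxA, hx12⟩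
      rw [hcon] at this
      exact this

/-- **Removable singularity and maximum principle with `o(log)` growth.**  Let `D` be a
bounded domain containing `0`, and let `u` be continuous on `closure D \ {0}`, subharmonic on
`D \ {0}`, nonpositive on `∂D`, and `u(z) = o(log(1/|z|))` as `z → 0`.  Then `u ≤ 0` on
`D \ {0}`, and if `u` vanishes at some point of `D \ {0}` then `u ≡ 0` on `D \ {0}`. -/
theorem max_principle_o_log (D : Set ℂ)
    (hopen : IsOpen D) (hconn : IsConnected D) (hbdd : Bornology.IsBounded D)
    (h0 : (0:ℂ) ∈ D)
    (u : ℂ → ℝ)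
    (hc : ContinuousOn u (closure D \ {0}))
    (hsub : SubharmonicOn u (D \ {0}))
    (hbv : ∀ z ∈ frontier D, u z ≤ 0)
    (hgrowth : Tendsto (fun z : ℂ => u z / Real.log (1 / ‖z‖))
      (nhdsWithin 0 (D \ {0})) (nhds 0)) :
    (∀ z ∈ D \ {0}, u z ≤ 0) ∧
      (∀ z₀ ∈ D \ {0}, u z₀ = 0 → ∀ z ∈ D \ {0}, u z = 0) := by
  obtain ⟨hucont, husm⟩ := hsub
  obtain ⟨R₀, hR₀⟩ := (Metric.isBounded_iff_subset_closedBall (0:ℂ)).1 hbdd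
  set R : ℝ := max R₀ 0 + 1 with hRdef
  have hR1 : 1 ≤ R := by
    have := le_max_right R₀ 0
    simp only [hRdef]
    linarith
  have hDR : D ⊆ Metric.closedBall 0 (max R₀ 0) :=
    hR₀.trans (closedBall_subset_closedBall (le_max_left _ _))
  have hclD : closure D ⊆ Metric.closedBall 0 (max R₀ 0) :=
    closure_minimal hDR Metric.isClosed_closedBall
  have part1 : ∀ z ∈ D \ {0}, u z ≤ 0 := by
    rintro z ⟨hzD, hz0⟩
    have hz0' : z ≠ 0 := hz0
    have habsz : 0 < ‖z‖ := norm_pos_iff.mpr hz0'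
    set C : ℝ := Real.log R - Real.log (‖z‖) with hCdef
    have hzR : ‖z‖ < R := by
      have h1 := hclD (subset_closure hzD)
      rw [mem_closedBall, Complex.dist_eq, sub_zero] at h1
      simp only [hRdef]
      linarith
    have hCpos : 0 < C := sub_pos.2 (Real.log_lt_log habsz hzR)
    have key : ∀ ε : ℝ, 0 < ε → u z ≤ ε * C := by
      intro ε hε
      obtain ⟨η, hη, hgr⟩ := Metric.tendsto_nhdsWithin_nhds.1 hgrowth (ε/2) (by linarith)
      obtain ⟨δ₀, hδ₀, hballD⟩ := Metric.isOpen_iff.1 hopen 0 h0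
      set δ : ℝ := min (min (δ₀/2) (η/2)) (min (1/2) (‖z‖ / 2)) with hδdef
      have hδpos : 0 < δ :=
        lt_min (lt_min (by linarith) (by linarith)) (lt_min (by norm_num) (by linarith))
      have hδδ₀ : δ < δ₀ :=
        lt_of_le_of_lt ((min_le_left _ _).trans (min_le_left _ _)) (by linarith)
      have hδη : δ < η :=
        lt_of_le_of_lt ((min_le_left _ _).trans (min_le_right _ _)) (by linarith)
      have hδ1 : δ < 1 :=
        lt_of_le_of_lt ((min_le_right _ _).trans (min_le_left _ _)) (by norm_num)
      have hδz : δ < ‖z‖ :=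
        lt_of_le_of_lt ((min_le_right _ _).trans (min_le_right _ _)) (by linarith)
      have hcbD : Metric.closedBall 0 δ ⊆ D := (closedBall_subset_ball hδδ₀).trans hballD
      set U' : Set ℂ := D \ Metric.closedBall 0 δ with hU'def
      have hU'open : IsOpen U' := hopen.sdiff Metric.isClosed_closedBall
      have hU'b : Bornology.IsBounded U' := hbdd.subset diff_subset
      have hU'sub : U' ⊆ D \ {0} := by
        rintro w ⟨hwD, hwB⟩
        refine ⟨hwD, ?_⟩
        intro h
        rw [mem_singleton_iff] at h
        exact hwB (by rw [h]; exact mem_closedBall_self hδpos.le)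
      have hclU'ball : closure U' ⊆ (Metric.ball (0:ℂ) δ)ᶜ := by
        apply closure_minimal ?_ (isOpen_ball.isClosed_compl)
        rintro y ⟨_, hy2⟩ hyb
        exact hy2 (ball_subset_closedBall hyb)
      have hclU' : closure U' ⊆ closure D \ {0} := by
        intro w hw
        refine ⟨closure_mono diff_subset hw, ?_⟩
        intro h
        rw [mem_singleton_iff] at h
        exact (hclU'ball hw) (by rw [h]; exact mem_ball_self hδpos)
      set v : ℂ → ℝ := fun w => u w + ε * (Real.log (‖w‖) - Real.log R) with hvdef
      have hlogcont : ContinuousOn (fun w : ℂ => Real.log (‖w‖)) {(0:ℂ)}ᶜ := by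
        apply Real.continuousOn_log.comp continuous_norm.continuousOn
        intro w hw
        simp only [mem_compl_iff, mem_singleton_iff] at hw ⊢
        exact norm_ne_zero_iff.mpr hw
      have hvcont : ContinuousOn v (closure U') := by
        apply ContinuousOn.add (hc.mono hclU')
        apply ContinuousOn.mul continuousOn_const
        apply ContinuousOn.sub ?_ continuousOn_const
        apply hlogcont.mono
        intro w hw
        simp only [mem_compl_iff, mem_singleton_iff]
        exact (hclU' hw).2
      have hvsm : ∀ (w : ℂ) (r : ℝ), 0 < r → Metric.closedBall w r ⊆ U' →
          v w ≤ (2 * Real.pi)⁻¹ *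
            ∫ t in (0:ℝ)..(2 * Real.pi), v (w + (r:ℂ) * Complex.exp (Complex.I * t)) := by
        intro w r hr hcb
        have h2pi : (0:ℝ) < 2 * Real.pi := by positivity
        have hcbD0 : Metric.closedBall w r ⊆ D \ {0} := hcb.trans hU'sub
        have hu := husm w r hr hcbD0
        have hrw : r < ‖w‖ := by
          have h0nb : (0:ℂ) ∉ Metric.closedBall w r := fun h => (hcbD0 h).2 rfl
          rw [mem_closedBall] at h0nb
          push_neg at h0nb
          rwa [Complex.dist_eq, zero_sub, norm_neg] at h0nb
        have hml := mean_log hr hrw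
        have habsexp : ∀ t : ℝ, ‖Complex.exp (Complex.I * t)‖ = 1 := by
          intro t
          rw [mul_comm]
          exact Complex.norm_exp_ofReal_mul_I t
        have hmemc : ∀ t : ℝ, w + (r:ℂ) * Complex.exp (Complex.I * t)
            ∈ Metric.closedBall w r := by
          intro t
          rw [mem_closedBall, Complex.dist_eq]
          have heq : w + (r:ℂ) * Complex.exp (Complex.I * t) - w
              = (r:ℂ) * Complex.exp (Complex.I * t) := by ring
          rw [heq, norm_mul, habsexp, mul_one]
          simp [abs_of_pos hr]
        have hφcont : Continuous fun t : ℝ => w + (r:ℂ) * Complex.exp (Complex.I * t) :=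
          continuous_const.add (continuous_const.mul
            (Complex.continuous_exp.comp (continuous_const.mul Complex.continuous_ofReal)))
        have hucirc : Continuous fun t : ℝ => u (w + (r:ℂ) * Complex.exp (Complex.I * t)) :=
          hucont.comp_continuous hφcont (fun t => hcbD0 (hmemc t))
        have habs0 : ∀ t : ℝ, ‖w + (r:ℂ) * Complex.exp (Complex.I * t)‖ ≠ 0 := by
          intro t
          apply norm_ne_zero_iff.mpr
          exact fun h => (hcbD0 (hmemc t)).2 (by rw [mem_singleton_iff, h])
        have hlogcirc : Continuous fun t : ℝ =>
            Real.log (‖w + (r:ℂ) * Complex.exp (Complex.I * t)‖) := by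
          rw [continuous_iff_continuousAt]
          intro t
          exact ContinuousAt.comp (x := t) ((Real.continuousAt_log (habs0 t)).comp
            continuous_norm.continuousAt) hφcont.continuousAt
        have hint_eq : (∫ t in (0:ℝ)..(2 * Real.pi),
              v (w + (r:ℂ) * Complex.exp (Complex.I * t)))
            = (∫ t in (0:ℝ)..(2 * Real.pi), u (w + (r:ℂ) * Complex.exp (Complex.I * t)))
              + ε * (2 * Real.pi * Real.log (‖w‖))
              - 2 * Real.pi * (ε * Real.log R) := by
          have h1 : (fun t : ℝ => v (w + (r:ℂ) * Complex.exp (Complex.I * t)))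
              = fun t : ℝ => (u (w + (r:ℂ) * Complex.exp (Complex.I * t))
                + ε * Real.log (‖w + (r:ℂ) * Complex.exp (Complex.I * t)‖))
                - ε * Real.log R := by
            funext t
            simp only [hvdef]
            ring
          rw [h1]
          rw [intervalIntegral.integral_sub
            (show IntervalIntegrable (fun t : ℝ => u (w + (r:ℂ) * Complex.exp (Complex.I * t))
                + ε * Real.log (‖w + (r:ℂ) * Complex.exp (Complex.I * t)‖)) MeasureTheory.volume
                0 (2 * Real.pi) from
              Continuous.intervalIntegrable (hucirc.add (continuous_const.mul hlogcirc)) _ _)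
            (intervalIntegrable_const (c := ε * Real.log R))]
          rw [intervalIntegral.integral_add (hucirc.intervalIntegrable _ _)
            (show IntervalIntegrable (fun t : ℝ =>
                ε * Real.log (‖w + (r:ℂ) * Complex.exp (Complex.I * t)‖)) MeasureTheory.volume
                0 (2 * Real.pi) from
              (continuous_const.mul hlogcirc).intervalIntegrable _ _)]
          rw [intervalIntegral.integral_const_mul, hml, intervalIntegral.integral_const]
          simp only [smul_eq_mul, sub_zero]
          try ring
        have hgoal : (2 * Real.pi)⁻¹ * (∫ t in (0:ℝ)..(2 * Real.pi),
              v (w + (r:ℂ) * Complex.exp (Complex.I * t)))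
            = (2 * Real.pi)⁻¹ * (∫ t in (0:ℝ)..(2 * Real.pi),
                u (w + (r:ℂ) * Complex.exp (Complex.I * t)))
              + ε * Real.log (‖w‖) - ε * Real.log R := by
          rw [hint_eq]
          field_simp
        simp only [hvdef]
        rw [hgoal]
        linarith
      have hvfr : ∀ w ∈ frontier U', v w ≤ 0 := by
        intro w hwf
        have hfr_sub : frontier U' ⊆ frontier D ∪ Metric.sphere (0:ℂ) δ := by
          have heq : U' = D ∩ (Metric.closedBall (0:ℂ) δ)ᶜ := by
            rw [hU'def, diff_eq]
          rw [heq]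
          refine (frontier_inter_subset _ _).trans ?_
          apply union_subset_union
          · exact inter_subset_left
          · intro y hy
            have := hy.2
            rwa [frontier_compl, frontier_closedBall _ hδpos.ne'] at this
        rcases hfr_sub hwf with h | h
        · have hwcl : w ∈ closure D := frontier_subset_closure h
          have hwnD : w ∉ D := by
            rw [hopen.frontier_eq] at h
            exact h.2
          have hw0 : w ≠ 0 := fun h' => hwnD (h' ▸ h0)
          have hu0 := hbv w h
          have hwR : ‖w‖ ≤ R := by
            have := hclD hwcl
            rw [mem_closedBall, Complex.dist_eq, sub_zero] at this
            simp only [hRdef]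
            linarith
          have hlogle : Real.log (‖w‖) ≤ Real.log R :=
            (Real.log_le_log_iff (norm_pos_iff.mpr hw0) (by linarith)).2 hwR
          have hnn : 0 ≤ ε * (Real.log R - Real.log (‖w‖)) :=
            mul_nonneg hε.le (by linarith)
          simp only [hvdef]
          linarith
        · have hwD : w ∈ D := hcbD (sphere_subset_closedBall h)
          have hwabs : ‖w‖ = δ := by
            rw [mem_sphere, Complex.dist_eq, sub_zero] at h
            exact h
          have hw0 : w ≠ 0 := by
            intro h'
            rw [h', norm_zero] at hwabs
            exact hδpos.ne hwabs
          have hgr' := hgr ⟨hwD, hw0⟩ (by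
            rw [Complex.dist_eq, sub_zero, hwabs]
            exact hδη)
          rw [Real.dist_eq, sub_zero] at hgr'
          have hlogδpos : 0 < Real.log (1/δ) :=
            Real.log_pos ((one_lt_div hδpos).2 hδ1)
          have hulog : u w / Real.log (1 / ‖w‖) < ε/2 := lt_of_abs_lt hgr'
          rw [hwabs] at hulog
          have huw : u w < ε/2 * Real.log (1/δ) := (div_lt_iff₀ hlogδpos).1 hulog
          have hlogδeq : Real.log (1/δ) = - Real.log δ := by rw [one_div, Real.log_inv]
          have hlogδneg : Real.log δ < 0 := Real.log_neg hδpos hδ1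
          have hlogR : 0 ≤ Real.log R := Real.log_nonneg hR1
          have huw' : u w < -(ε/2 * Real.log δ) := by
            rw [hlogδeq] at huw
            linarith
          have h3 : ε * Real.log δ ≤ ε/2 * Real.log δ :=
            mul_le_mul_of_nonpos_right (by linarith) hlogδneg.le
          have h2 : 0 ≤ ε * Real.log R := mul_nonneg hε.le hlogR
          simp only [hvdef]
          rw [hwabs]
          nlinarith
      have hzU' : z ∈ U' := by
        refine ⟨hzD, ?_⟩
        rw [mem_closedBall, Complex.dist_eq, sub_zero]
        exact not_le.2 hδz
      have hvz := weakMax hU'open hU'b hvcont hvsm hvfr z hzU'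
      simp only [hvdef] at hvz
      have hεC : ε * C = -(ε * (Real.log (‖z‖) - Real.log R)) := by
        rw [hCdef]; ring
      linarith
    by_contra hcon'
    push_neg at hcon'
    have hk := key (u z / (2*C)) (by positivity)
    have heq : u z / (2*C) * C = u z / 2 := by
      field_simp
    rw [heq] at hk
    linarith
  refine ⟨part1, ?_⟩
  rintro z₀ hz₀ hu0 z hz
  exact eqZeroOn (hopen.sdiff isClosed_singleton)
    (punctured_domain_preconnected hopen hconn.isPreconnected h0)
    hucont husm part1 hz₀ hu0 z hz
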